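/- Let V : ℝ → (ℝ^d →L[ℝ] ℝ^d) be continuous and bounded, with evolution operator T for ẋ = V(t)x satisfying ‖T(t,s)^{-1}‖ ≤ K·e^{−η(t−s)} for all t ≥ s, where K, η > 0. Then for any bounded linear operator H, the perturbed equation ẏ = (V(t) + H)y admits an evolution operator T̂ satisfying ‖T̂(t,s)^{-1}‖ ≤ K·e^{−(η − K‖H‖)(t−s)} for all t ≥ s. -/

import Mathlib

open Real Set intervalIntegral Metric

lemma aux_fwd {E : Type*} [NormedAddCommGroup E] [NormedSpace ℝ E]
    {V : ℝ → E →L[ℝ] E} {MV : ℝ} (hVb : ∀ t, ‖V t‖ ≤ MV)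
    {f : ℝ → E} (hf : ∀ u, HasDerivAt f (V u (f u)) u)
    {a b : ℝ} (hab : a ≤ b) : ‖f b‖ ≤ Real.exp (MV * (b - a)) * ‖f a‖ := by
  have h := norm_le_gronwallBound_of_norm_deriv_right_le
    (f := f) (f' := fun u => V u (f u)) (δ := ‖f a‖) (K := MV) (ε := 0) (a := a) (b := b)
    (fun u _ => (hf u).continuousAt.continuousWithinAt)
    (fun u _ => (hf u).hasDerivWithinAt)
    le_rfl
    (fun u _ => by
      simpa using ((V u).le_opNorm (f u)).trans
        (mul_le_mul_of_nonneg_right (hVb u) (norm_nonneg _)))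
    b ⟨hab, le_rfl⟩
  rwa [gronwallBound_ε0, mul_comm] at h

lemma aux_norm {E : Type*} [NormedAddCommGroup E] [NormedSpace ℝ E]
    {V : ℝ → E →L[ℝ] E} {MV : ℝ} (hVb : ∀ t, ‖V t‖ ≤ MV)
    {f : ℝ → E} (hf : ∀ u, HasDerivAt f (V u (f u)) u)
    (a b : ℝ) : ‖f b‖ ≤ Real.exp (MV * |b - a|) * ‖f a‖ := by
  rcases le_total a b with hab | hba
  · rw [abs_of_nonneg (by linarith)]
    exact aux_fwd hVb hf hab
  · rw [abs_of_nonpos (by linarith)]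
    set g : ℝ → E := fun τ => f (a + b - τ) with hg
    set W : ℝ → E →L[ℝ] E := fun τ => -(V (a + b - τ)) with hW
    have hWb : ∀ τ, ‖W τ‖ ≤ MV := fun τ => by simpa [hW] using hVb (a + b - τ)
    have hg' : ∀ τ, HasDerivAt g (W τ (g τ)) τ := by
      intro τ
      have h1 : HasDerivAt (fun τ : ℝ => a + b - τ) (-1) τ := by
        simpa using ((hasDerivAt_id τ).const_sub (a + b))
      have := (hf (a + b - τ)).scomp τ h1
      simpa [hW, hg, Function.comp_def] using this
    have := aux_fwd hWb hg' (a := b) (b := a) hba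
    simpa [hg, show a + b - b = a by ring, show a + b - a = b by ring,
      show -(b - a) = a - b by ring] using this

section Evol

variable {E : Type*} [NormedAddCommGroup E] [NormedSpace ℝ E] [CompleteSpace E]
  {V : ℝ → E →L[ℝ] E} {MV : ℝ}
  {T : ℝ → ℝ → E →L[ℝ] E}

/-- Pointwise norm bound on the evolution operator. -/
lemma evol_norm (hVb : ∀ t, ‖V t‖ ≤ MV)
    (hTid : ∀ t : ℝ, T t t = ContinuousLinearMap.id ℝ E)
    (hTode : ∀ (s t : ℝ) (x : E), HasDerivAt (fun u => T u s x) (V t (T t s x)) t)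
    (u a : ℝ) : ‖T u a‖ ≤ Real.exp (MV * |u - a|) := by
  refine ContinuousLinearMap.opNorm_le_bound _ (Real.exp_nonneg _) fun x => ?_
  have := aux_norm hVb (f := fun r => T r a x) (fun u => hTode a u x) a u
  simpa [hTid] using this

/-- Operator-norm continuity of `u ↦ T u a`. -/
lemma evol_cont (hVc : Continuous V) (hVb : ∀ t, ‖V t‖ ≤ MV)
    (hTid : ∀ t : ℝ, T t t = ContinuousLinearMap.id ℝ E)
    (hTode : ∀ (s t : ℝ) (x : E), HasDerivAt (fun u => T u s x) (V t (T t s x)) t)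
    (a : ℝ) : Continuous fun u => T u a := by
  have hMV0 : 0 ≤ MV := (norm_nonneg _).trans (hVb 0)
  rw [continuous_iff_continuousAt]
  intro u0
  set C : ℝ := MV * Real.exp (MV * (|u0 - a| + 1)) with hCdef
  have hC0 : 0 ≤ C := mul_nonneg hMV0 (Real.exp_nonneg _)
  have key : ∀ u ∈ closedBall u0 1, ∀ v ∈ closedBall u0 1,
      ‖T u a - T v a‖ ≤ C * |u - v| := by
    intro u hu v hv
    refine ContinuousLinearMap.opNorm_le_bound _ (mul_nonneg hC0 (abs_nonneg _)) fun x => ?_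
    have hgc : Continuous fun r => V r (T r a x) :=
      hVc.clm_apply (continuous_iff_continuousAt.2 fun r => (hTode a r x).continuousAt)
    have ftc : ∫ r in v..u, V r (T r a x) = T u a x - T v a x :=
      intervalIntegral.integral_eq_sub_of_hasDerivAt (fun r _ => hTode a r x)
        (hgc.intervalIntegrable _ _)
    rw [ContinuousLinearMap.sub_apply, ← ftc]
    have hb : ∀ r ∈ Set.uIoc v u, ‖V r (T r a x)‖ ≤ C * ‖x‖ := by
      intro r hr
      have hr' : r ∈ Set.uIcc v u := Set.uIoc_subset_uIcc hr
      have hru0 : |r - u0| ≤ 1 := by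
        rw [Set.uIcc_eq_union] at hr'
        rw [mem_closedBall, Real.dist_eq] at hu hv
        rcases hr' with h | h <;> rcases h with ⟨h1, h2⟩ <;> rw [abs_le] <;>
          constructor <;> cases abs_le.1 hu <;> cases abs_le.1 hv <;> linarith
      have hra : |r - a| ≤ |u0 - a| + 1 := by
        have h1 := abs_sub_le r u0 a
        linarith
      calc ‖V r (T r a x)‖ ≤ ‖V r‖ * ‖T r a x‖ := (V r).le_opNorm _
        _ ≤ MV * (Real.exp (MV * |r - a|) * ‖x‖) := by
            refine mul_le_mul (hVb r) ?_ (norm_nonneg _) hMV0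
            have h1 : ‖T r a x‖ ≤ ‖T r a‖ * ‖x‖ := (T r a).le_opNorm x
            have h2 := evol_norm hVb hTid hTode r a
            exact h1.trans (mul_le_mul_of_nonneg_right h2 (norm_nonneg _))
        _ ≤ MV * (Real.exp (MV * (|u0 - a| + 1)) * ‖x‖) := by
            refine mul_le_mul_of_nonneg_left (mul_le_mul_of_nonneg_right ?_ (norm_nonneg _)) hMV0
            exact Real.exp_le_exp.2 (mul_le_mul_of_nonneg_left hra hMV0)
        _ = C * ‖x‖ := by rw [hCdef]; ring
    have := intervalIntegral.norm_integral_le_of_norm_le_const hb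
    calc ‖∫ r in v..u, V r (T r a x)‖ ≤ C * ‖x‖ * |u - v| := this
      _ = C * |u - v| * ‖x‖ := by ring
  have lip : LipschitzOnWith C.toNNReal (fun u => T u a) (closedBall u0 1) := by
    refine LipschitzOnWith.of_dist_le_mul fun u hu v hv => ?_
    rw [dist_eq_norm, Real.dist_eq, Real.coe_toNNReal _ hC0]
    exact key u hu v hv
  exact (lip.continuousOn.continuousWithinAt (mem_closedBall_self zero_le_one)).continuousAt
    (closedBall_mem_nhds u0 one_pos)

/-- Operator-norm derivative of `u ↦ T u a`. -/
lemma evol_hasDerivAt (hVc : Continuous V) (hVb : ∀ t, ‖V t‖ ≤ MV)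
    (hTid : ∀ t : ℝ, T t t = ContinuousLinearMap.id ℝ E)
    (hTode : ∀ (s t : ℝ) (x : E), HasDerivAt (fun u => T u s x) (V t (T t s x)) t)
    (a u0 : ℝ) : HasDerivAt (fun u => T u a) ((V u0).comp (T u0 a)) u0 := by
  have hVA : Continuous fun r => (V r).comp (T r a) :=
    hVc.clm_comp (evol_cont hVc hVb hTid hTode a)
  have Aeq : ∀ u, T u a = T a a + ∫ r in a..u, (V r).comp (T r a) := by
    intro u
    ext x
    rw [ContinuousLinearMap.add_apply,
      ContinuousLinearMap.intervalIntegral_apply (hVA.intervalIntegrable _ _)]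
    have hgc : Continuous fun r => V r (T r a x) :=
      hVc.clm_apply (continuous_iff_continuousAt.2 fun r => (hTode a r x).continuousAt)
    have ftc : ∫ r in a..u, V r (T r a x) = T u a x - T a a x :=
      intervalIntegral.integral_eq_sub_of_hasDerivAt (fun r _ => hTode a r x)
        (hgc.intervalIntegrable _ _)
    simp only [ContinuousLinearMap.comp_apply]
    rw [ftc]
    abel
  have h1 : HasDerivAt (fun u => T a a + ∫ r in a..u, (V r).comp (T r a))
      ((V u0).comp (T u0 a)) u0 := by
    have := intervalIntegral.integral_hasDerivAt_right
      (f := fun r => (V r).comp (T r a)) (a := a) (b := u0)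
      (hVA.intervalIntegrable _ _)
      (by
        haveI : SecondCountableTopologyEither ℝ (E →L[ℝ] E) :=
          secondCountableTopologyEither_of_left ℝ _
        exact hVA.stronglyMeasurableAtFilter _ _)
      hVA.continuousAt
    exact this.const_add _
  exact h1.congr_of_eventuallyEq (Filter.Eventually.of_forall fun u => Aeq u)

/-- Operator-norm derivative of the inverse evolution operator `u ↦ T a u`. -/
lemma evol_inv_hasDerivAt (hVc : Continuous V) (hVb : ∀ t, ‖V t‖ ≤ MV)
    (hTid : ∀ t : ℝ, T t t = ContinuousLinearMap.id ℝ E)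
    (hTcoc : ∀ t s r : ℝ, (T t s).comp (T s r) = T t r)
    (hTode : ∀ (s t : ℝ) (x : E), HasDerivAt (fun u => T u s x) (V t (T t s x)) t)
    (a u0 : ℝ) : HasDerivAt (fun u => T a u) (-((T a u0).comp (V u0))) u0 := by
  have hone : ∀ u v : ℝ, (T u v) * (T v u) = 1 := by
    intro u v
    rw [ContinuousLinearMap.mul_def, hTcoc, hTid, ContinuousLinearMap.one_def]
  have hinv : ∀ u, T a u = Ring.inverse (T u a) := fun u =>
    (Ring.inverse_unit ⟨T u a, T a u, hone u a, hone a u⟩).symm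
  have hd := (hasFDerivAt_ringInverse (𝕜 := ℝ)
      ⟨T u0 a, T a u0, hone u0 a, hone a u0⟩).comp_hasDerivAt u0
    (evol_hasDerivAt hVc hVb hTid hTode a u0)
  have hd' : HasDerivAt (fun u => Ring.inverse (T u a))
      (-(T a u0 * ((V u0).comp (T u0 a)) * T a u0)) u0 := by
    simpa [Function.comp_def, ContinuousLinearMap.mulLeftRight_apply] using hd
  have heq : (T a u0) * ((V u0).comp (T u0 a)) * (T a u0) = (T a u0).comp (V u0) := by
    ext x
    simp only [ContinuousLinearMap.mul_apply, ContinuousLinearMap.comp_apply]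
    congr 1
    have : T u0 a (T a u0 x) = x := by
      rw [← ContinuousLinearMap.comp_apply, hTcoc, hTid]
      rfl
    rw [this]
  rw [heq] at hd'
  exact hd'.congr_of_eventuallyEq (Filter.Eventually.of_forall fun u => hinv u)

end Evol

/-- If the evolution operator `T` of `ẋ = V(t)x` satisfies
`‖T(t,s)⁻¹‖ ≤ K e^{−η(t−s)}` for `t ≥ s` (here `T(t,s)⁻¹ = T s t` by the cocycle
property), then the evolution operator `T̂` of the perturbed equation
`ẏ = (V(t)+H)y` satisfies `‖T̂(t,s)⁻¹‖ ≤ K e^{−(η−K‖H‖)(t−s)}` for all `t ≥ s`. -/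
theorem stmt1 (d : ℕ) (hd : 1 ≤ d)
    (V : ℝ → (EuclideanSpace ℝ (Fin d) →L[ℝ] EuclideanSpace ℝ (Fin d)))
    (hVc : Continuous V) (MV : ℝ) (hVb : ∀ t : ℝ, ‖V t‖ ≤ MV)
    (H : EuclideanSpace ℝ (Fin d) →L[ℝ] EuclideanSpace ℝ (Fin d))
    (K η : ℝ) (hK : 0 < K) (hη : 0 < η)
    (T That : ℝ → ℝ → (EuclideanSpace ℝ (Fin d) →L[ℝ] EuclideanSpace ℝ (Fin d)))
    -- `T` is the evolution operator of `ẋ = V(t)x`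
    (hTid : ∀ t : ℝ, T t t = ContinuousLinearMap.id ℝ _)
    (hTcoc : ∀ t s r : ℝ, (T t s).comp (T s r) = T t r)
    (hTode : ∀ (s t : ℝ) (x : EuclideanSpace ℝ (Fin d)),
      HasDerivAt (fun u => T u s x) (V t (T t s x)) t)
    -- instability: `‖T(t,s)⁻¹‖ = ‖T s t‖ ≤ K e^{−η(t−s)}`
    (hinstab : ∀ t s : ℝ, s ≤ t → ‖T s t‖ ≤ K * Real.exp (-η * (t - s)))
    -- `T̂` is the evolution operator of `ẏ = (V(t)+H)y`
    (hThid : ∀ t : ℝ, That t t = ContinuousLinearMap.id ℝ _)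
    (hThcoc : ∀ t s r : ℝ, (That t s).comp (That s r) = That t r)
    (hThode : ∀ (s t : ℝ) (x : EuclideanSpace ℝ (Fin d)),
      HasDerivAt (fun u => That u s x) (V t (That t s x) + H (That t s x)) t) :
    ∀ t s : ℝ, s ≤ t → ‖That s t‖ ≤ K * Real.exp (-(η - K * ‖H‖) * (t - s)) := by
  intro t s hst
  set L : ℝ := K * ‖H‖ with hLdef
  have hL0 : 0 ≤ L := mul_nonneg hK.le (norm_nonneg _)
  refine ContinuousLinearMap.opNorm_le_bound _
    (mul_nonneg hK.le (Real.exp_nonneg _)) fun x => ?_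
  -- the solution of the perturbed equation, backward from time t
  set y : ℝ → EuclideanSpace ℝ (Fin d) := fun u => That u t x with hydef
  have hy : ∀ u, HasDerivAt y (V u (y u) + H (y u)) u := fun u => hThode t u x
  have hycont : Continuous y := continuous_iff_continuousAt.2 fun u => (hy u).continuousAt
  -- derivative of the inverse unperturbed evolution operator
  have hB : ∀ a u0 : ℝ, HasDerivAt (fun u => T a u) (-((T a u0).comp (V u0))) u0 :=
    fun a u0 => evol_inv_hasDerivAt hVc hVb hTid hTcoc hTode a u0
  have hBcont : ∀ a : ℝ, Continuous fun u => T a u := fun a =>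
    continuous_iff_continuousAt.2 fun u0 => (hB a u0).continuousAt
  -- variation of constants
  have inteq : ∀ r : ℝ, That r t x = T r t x - ∫ ρ in r..t, T r ρ (H (y ρ)) := by
    intro r
    have hc : ∀ u0, HasDerivAt (fun u => T r u (y u)) (T r u0 (H (y u0))) u0 := by
      intro u0
      have h1 := (hB r u0).clm_apply (hy u0)
      have h2 : (-((T r u0).comp (V u0))) (y u0) + (T r u0) (V u0 (y u0) + H (y u0))
          = T r u0 (H (y u0)) := by
        simp only [ContinuousLinearMap.neg_apply, ContinuousLinearMap.comp_apply, map_add]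
        abel
      rw [h2] at h1
      exact h1
    have hcint : Continuous fun u => T r u (H (y u)) :=
      (hBcont r).clm_apply (H.continuous.comp hycont)
    have ftc : ∫ ρ in r..t, T r ρ (H (y ρ)) = T r t (y t) - T r r (y r) :=
      intervalIntegral.integral_eq_sub_of_hasDerivAt (fun ρ _ => hc ρ)
        (hcint.intervalIntegrable _ _)
    rw [ftc]
    have h3 : y t = x := by simp [hydef, hThid t]
    have h4 : T r r (y r) = That r t x := by simp [hTid r, hydef]
    rw [h3, h4]
    abel
  -- the weighted norm
  set w : ℝ → ℝ := fun r => Real.exp (η * (t - r)) * ‖That r t x‖ with hwdef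
  have hw0 : ∀ r, 0 ≤ w r := fun r => mul_nonneg (Real.exp_nonneg _) (norm_nonneg _)
  have hwcont : Continuous w := by
    apply Continuous.mul
    · exact Real.continuous_exp.comp (by fun_prop)
    · exact hycont.norm
  -- integral inequality for w
  have hw : ∀ r, s ≤ r → r ≤ t → w r ≤ K * ‖x‖ + L * ∫ ρ in r..t, w ρ := by
    intro r _ hrt
    have hnorm : ‖That r t x‖ ≤ K * Real.exp (-η * (t - r)) * ‖x‖
        + ∫ ρ in r..t, K * Real.exp (-η * (ρ - r)) * ‖H‖ * ‖That ρ t x‖ := by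
      rw [inteq r]
      refine (norm_sub_le _ _).trans ?_
      gcongr
      · calc ‖T r t x‖ ≤ ‖T r t‖ * ‖x‖ := (T r t).le_opNorm x
          _ ≤ K * Real.exp (-η * (t - r)) * ‖x‖ := by
              exact mul_le_mul_of_nonneg_right (hinstab t r hrt) (norm_nonneg _)
      · have h1 : ‖∫ ρ in r..t, T r ρ (H (y ρ))‖ ≤ ∫ ρ in r..t, ‖T r ρ (H (y ρ))‖ :=
          intervalIntegral.norm_integral_le_integral_norm hrt
        refine h1.trans ?_
        have hlhsint : IntervalIntegrable (fun ρ => ‖T r ρ (H (y ρ))‖)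
            MeasureTheory.volume r t :=
          (((hBcont r).clm_apply (H.continuous.comp hycont)).norm).intervalIntegrable _ _
        have hrhsint : IntervalIntegrable
            (fun ρ => K * Real.exp (-η * (ρ - r)) * ‖H‖ * ‖That ρ t x‖)
            MeasureTheory.volume r t := by
          apply Continuous.intervalIntegrable
          exact ((continuous_const.mul
            (Real.continuous_exp.comp (by fun_prop))).mul continuous_const).mul hycont.norm
        refine intervalIntegral.integral_mono_on hrt hlhsint hrhsint fun ρ hρ => ?_
        calc ‖T r ρ (H (y ρ))‖ ≤ ‖T r ρ‖ * ‖H (y ρ)‖ := (T r ρ).le_opNorm _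
          _ ≤ (K * Real.exp (-η * (ρ - r))) * (‖H‖ * ‖y ρ‖) := by
              refine mul_le_mul (hinstab ρ r hρ.1) (H.le_opNorm _) (norm_nonneg _) ?_
              exact mul_nonneg hK.le (Real.exp_nonneg _)
          _ = K * Real.exp (-η * (ρ - r)) * ‖H‖ * ‖That ρ t x‖ := by
              rw [hydef]; ring
    -- multiply by exp (η (t - r))
    have h2 : w r ≤ Real.exp (η * (t - r)) * (K * Real.exp (-η * (t - r)) * ‖x‖)
        + Real.exp (η * (t - r)) * ∫ ρ in r..t, K * Real.exp (-η * (ρ - r)) * ‖H‖ * ‖That ρ t x‖ := by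
      rw [hwdef]
      simp only []
      rw [← mul_add]
      exact mul_le_mul_of_nonneg_left hnorm (Real.exp_nonneg _)
    have h3 : Real.exp (η * (t - r)) * (K * Real.exp (-η * (t - r)) * ‖x‖) = K * ‖x‖ := by
      rw [show Real.exp (η * (t - r)) * (K * Real.exp (-η * (t - r)) * ‖x‖)
        = (Real.exp (η * (t - r)) * Real.exp (-η * (t - r))) * (K * ‖x‖) by ring,
        ← Real.exp_add]
      norm_num
    have h4 : Real.exp (η * (t - r)) *
        (∫ ρ in r..t, K * Real.exp (-η * (ρ - r)) * ‖H‖ * ‖That ρ t x‖)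
        = L * ∫ ρ in r..t, w ρ := by
      rw [← intervalIntegral.integral_const_mul, ← intervalIntegral.integral_const_mul]
      refine intervalIntegral.integral_congr fun ρ _ => ?_
      rw [hwdef, hLdef]
      simp only []
      rw [show Real.exp (η * (t - r)) * (K * Real.exp (-η * (ρ - r)) * ‖H‖ * ‖That ρ t x‖)
        = (Real.exp (η * (t - r)) * Real.exp (-η * (ρ - r))) * (K * ‖H‖ * ‖That ρ t x‖) by ring,
        ← Real.exp_add, show η * (t - r) + -η * (ρ - r) = η * (t - ρ) by ring]
      ring
    rw [h3, h4] at h2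
    exact h2
  -- Gronwall via time reversal
  set f : ℝ → ℝ := fun σ => ∫ ρ in (t - σ)..t, w ρ with hfdef
  have hf' : ∀ σ : ℝ, HasDerivAt f (w (t - σ)) σ := by
    intro σ
    have hg : HasDerivAt (fun b => ∫ ρ in b..t, w ρ) (-w (t - σ)) (t - σ) := by
      refine intervalIntegral.integral_hasDerivAt_left
        (hwcont.intervalIntegrable _ _) ?_ hwcont.continuousAt
      exact hwcont.stronglyMeasurableAtFilter _ _
    have hh : HasDerivAt (fun σ : ℝ => t - σ) (-1) σ := by
      simpa using (hasDerivAt_id σ).const_sub t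
    have := hg.comp σ hh
    simpa [Function.comp_def] using this
  have hf0 : f 0 = 0 := by simp [hfdef]
  have hfnonneg : ∀ σ, 0 ≤ σ → σ ≤ t - s → 0 ≤ f σ := by
    intro σ hσ0 hσts
    rw [hfdef]
    apply intervalIntegral.integral_nonneg (by linarith)
    intro ρ _
    exact hw0 ρ
  have gron := norm_le_gronwallBound_of_norm_deriv_right_le
    (f := f) (f' := fun σ => w (t - σ)) (δ := 0) (K := L) (ε := K * ‖x‖)
    (a := 0) (b := t - s)
    (fun σ _ => (hf' σ).continuousAt.continuousWithinAt)
    (fun σ _ => (hf' σ).hasDerivWithinAt)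
    (by simp [hf0])
    (fun σ hσ => by
      have h1 : s ≤ t - σ := by cases hσ; linarith
      have h2 : t - σ ≤ t := by cases hσ; linarith
      have h3 := hw (t - σ) h1 h2
      have h4 : f σ = ∫ ρ in (t - σ)..t, w ρ := rfl
      have h5 : 0 ≤ f σ := hfnonneg σ hσ.1 (by cases hσ; linarith)
      rw [Real.norm_eq_abs, abs_of_nonneg (hw0 _), Real.norm_eq_abs, abs_of_nonneg h5]
      have h6 : w (t - σ) ≤ K * ‖x‖ + L * f σ := by rw [h4]; exact h3
      linarith)
    (t - s) ⟨by linarith, le_rfl⟩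
  -- conclude
  have hfb : f (t - s) ≤ gronwallBound 0 L (K * ‖x‖) (t - s) := by
    rw [show t - s - 0 = t - s by ring] at gron
    rwa [Real.norm_eq_abs, abs_of_nonneg (hfnonneg _ (by linarith) le_rfl)] at gron
  have hws : w s ≤ K * ‖x‖ + L * f (t - s) := by
    have h1 := hw s le_rfl hst
    have hfe : f (t - s) = ∫ ρ in s..t, w ρ := by
      simp only [hfdef]
      rw [show t - (t - s) = s by ring]
    rw [hfe]
    exact h1
  have hwsb : w s ≤ K * ‖x‖ * Real.exp (L * (t - s)) := by
    rcases eq_or_ne L 0 with hLz | hLz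
    · rw [hLz] at hws ⊢
      rw [zero_mul, Real.exp_zero, mul_one]
      simpa using hws
    · have hgb : gronwallBound 0 L (K * ‖x‖) (t - s)
          = K * ‖x‖ / L * (Real.exp (L * (t - s)) - 1) := by
        rw [gronwallBound_of_K_ne_0 hLz]
        simp
      have hfb' : L * f (t - s) ≤ L * gronwallBound 0 L (K * ‖x‖) (t - s) :=
        mul_le_mul_of_nonneg_left hfb hL0
      have h6 : w s ≤ K * ‖x‖ + L * (K * ‖x‖ / L * (Real.exp (L * (t - s)) - 1)) := by
        rw [← hgb]; linarith
      have h7 : K * ‖x‖ + L * (K * ‖x‖ / L * (Real.exp (L * (t - s)) - 1))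
          = K * ‖x‖ * Real.exp (L * (t - s)) := by
        field_simp
        ring
      linarith
  -- unfold w s
  have hfinal : ‖That s t x‖ = Real.exp (-η * (t - s)) * w s := by
    rw [hwdef]
    simp only []
    rw [← mul_assoc, ← Real.exp_add]
    norm_num
  rw [hfinal]
  calc Real.exp (-η * (t - s)) * w s
      ≤ Real.exp (-η * (t - s)) * (K * ‖x‖ * Real.exp (L * (t - s))) :=
        mul_le_mul_of_nonneg_left hwsb (Real.exp_nonneg _)
    _ = K * Real.exp (-(η - K * ‖H‖) * (t - s)) * ‖x‖ := by
        rw [show Real.exp (-η * (t - s)) * (K * ‖x‖ * Real.exp (L * (t - s)))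
          = (Real.exp (-η * (t - s)) * Real.exp (L * (t - s))) * (K * ‖x‖) by ring,
          ← Real.exp_add, hLdef, show -η * (t - s) + K * ‖H‖ * (t - s)
          = -(η - K * ‖H‖) * (t - s) by ring]
        ring
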